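/- Let λ ∈ ℂ with λ ≠ 0, and suppose φ : [0,L] → ℂ is twice continuously differentiable, not identically zero, and satisfies φ''(x) + λ²φ(x) = 0 for all x ∈ [0,L], together with the quasiperiodicity conditions φ(L) = ν φ(0) and φ'(L) = ν φ'(0). Then e^{iλL} = ν or e^{-iλL} = ν; consequently λ is real and there exists j ∈ ℤ such that λ = k cos θ + 2πj/L or λ = −k cos θ + 2πj/L. -/

import Mathlib

/- STATEMENT 0:
Fix L > 0, k > 0 and θ ∈ (0, π/2), and set ν = e^{ikL cos θ}.
Let λ ∈ ℂ with λ ≠ 0, and suppose φ : [0,L] → ℂ is twice continuously differentiable,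
not identically zero, and satisfies φ''(x) + λ²φ(x) = 0 for all x ∈ [0,L], together with
the quasiperiodicity conditions φ(L) = ν φ(0) and φ'(L) = ν φ'(0).
Then e^{iλL} = ν or e^{-iλL} = ν; consequently λ is real and there exists j ∈ ℤ such that
λ = k cos θ + 2πj/L or λ = −k cos θ + 2πj/L. -/
lemma lin_ode {L : ℝ} (hL : 0 < L) (c : ℂ) (f f' : ℝ → ℂ)
    (hf : ∀ x ∈ Set.Icc (0:ℝ) L, HasDerivAt f (f' x) x)
    (heq : ∀ x ∈ Set.Icc (0:ℝ) L, f' x = c * f x) :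
    ∀ x ∈ Set.Icc (0:ℝ) L, f x = f 0 * Complex.exp (c * x) := by
  set g : ℝ → ℂ := fun x => Complex.exp (-(c * x)) * f x with hg
  have h0 : (0:ℝ) ∈ Set.Icc (0:ℝ) L := by constructor <;> [rfl; exact hL.le]
  have hgd : ∀ x ∈ Set.Icc (0:ℝ) L, HasDerivWithinAt g 0 (Set.Icc (0:ℝ) L) x := by
    intro x hx
    have h1 : HasDerivAt (fun y : ℝ => Complex.exp (-(c * y)))
        (Complex.exp (-(c * x)) * (-c)) x := by
      have := (((hasDerivAt_id ((x:ℝ):ℂ)).const_mul c).neg.cexp).comp_ofReal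
      simpa using this
    have h2 := h1.mul (hf x hx)
    have : Complex.exp (-(c * x)) * (-c) * f x + Complex.exp (-(c * x)) * f' x = 0 := by
      rw [heq x hx]; ring
    rw [this] at h2
    exact h2.hasDerivWithinAt
  have key : ∀ x ∈ Set.Icc (0:ℝ) L, g x = g 0 := by
    intro x hx
    have := Convex.norm_image_sub_le_of_norm_hasDerivWithin_le (C := 0) hgd
      (fun x _ => by simp) (convex_Icc 0 L) h0 hx
    simp at this
    have : ‖g x - g 0‖ = 0 := by rw [this, norm_zero]
    exact sub_eq_zero.mp (norm_eq_zero.mp this)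
  intro x hx
  have h := key x hx
  simp only [hg] at h
  rw [show ((0:ℝ):ℂ) = 0 by norm_num] at h
  rw [mul_zero, neg_zero, Complex.exp_zero, one_mul] at h
  calc f x = Complex.exp (c * x) * (Complex.exp (-(c * x)) * f x) := by
        rw [← mul_assoc, ← Complex.exp_add]; simp
    _ = f 0 * Complex.exp (c * x) := by rw [h]; ring

theorem statement0
    (L k θ : ℝ) (hL : 0 < L) (hk : 0 < k) (hθ : θ ∈ Set.Ioo 0 (Real.pi / 2))
    (ν : ℂ) (hν : ν = Complex.exp (Complex.I * k * L * Real.cos θ))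
    (lam : ℂ) (hlam : lam ≠ 0)
    (φ φ' φ'' : ℝ → ℂ)
    (hd1 : ∀ x ∈ Set.Icc (0 : ℝ) L, HasDerivAt φ (φ' x) x)
    (hd2 : ∀ x ∈ Set.Icc (0 : ℝ) L, HasDerivAt φ' (φ'' x) x)
    (hc2 : ContinuousOn φ'' (Set.Icc (0 : ℝ) L))
    (hode : ∀ x ∈ Set.Icc (0 : ℝ) L, φ'' x + lam ^ 2 * φ x = 0)
    (hnontriv : ∃ x ∈ Set.Icc (0 : ℝ) L, φ x ≠ 0)
    (hqp1 : φ L = ν * φ 0) (hqp2 : φ' L = ν * φ' 0) :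
    (Complex.exp (Complex.I * lam * L) = ν ∨ Complex.exp (-(Complex.I * lam * L)) = ν)
      ∧ lam.im = 0
      ∧ ∃ j : ℤ, lam = ((k * Real.cos θ + 2 * Real.pi * j / L : ℝ) : ℂ)
          ∨ lam = ((-(k * Real.cos θ) + 2 * Real.pi * j / L : ℝ) : ℂ) := by
  have hL0 : (L:ℂ) ≠ 0 := by exact_mod_cast hL.ne'
  have h0 : (0:ℝ) ∈ Set.Icc (0:ℝ) L := by constructor <;> [rfl; exact hL.le]
  have hLm : L ∈ Set.Icc (0:ℝ) L := by constructor <;> [exact hL.le; rfl]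
  set u : ℝ → ℂ := fun x => φ' x - Complex.I * lam * φ x with hu
  set v : ℝ → ℂ := fun x => φ' x + Complex.I * lam * φ x with hv
  have hueq : ∀ x ∈ Set.Icc (0:ℝ) L, u x = u 0 * Complex.exp (-(Complex.I * lam) * x) := by
    apply lin_ode hL (-(Complex.I * lam)) u (fun x => φ'' x - Complex.I * lam * φ' x)
    · intro x hx
      exact (hd2 x hx).sub ((hd1 x hx).const_mul _)
    · intro x hx
      have h := hode x hx
      have hI := Complex.I_sq
      simp only [hu]
      linear_combination h - lam ^ 2 * φ x * hI
  have hveq : ∀ x ∈ Set.Icc (0:ℝ) L, v x = v 0 * Complex.exp ((Complex.I * lam) * x) := by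
    apply lin_ode hL (Complex.I * lam) v (fun x => φ'' x + Complex.I * lam * φ' x)
    · intro x hx
      exact (hd2 x hx).add ((hd1 x hx).const_mul _)
    · intro x hx
      have h := hode x hx
      have hI := Complex.I_sq
      simp only [hv]
      linear_combination h - lam ^ 2 * φ x * hI
  have huL : u L = ν * u 0 := by simp only [hu]; rw [hqp1, hqp2]; ring
  have hvL : v L = ν * v 0 := by simp only [hv]; rw [hqp1, hqp2]; ring
  have hufac : u 0 * (Complex.exp (-(Complex.I * lam * L)) - ν) = 0 := by
    have h1 := hueq L hLm
    rw [huL, show -(Complex.I * lam) * (L:ℂ) = -(Complex.I * lam * L) by ring] at h1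
    linear_combination -h1
  have hvfac : v 0 * (Complex.exp (Complex.I * lam * L) - ν) = 0 := by
    have h1 := hveq L hLm
    rw [hvL] at h1
    linear_combination -h1
  -- nontriviality: u 0 ≠ 0 or v 0 ≠ 0
  have hnz : u 0 ≠ 0 ∨ v 0 ≠ 0 := by
    by_contra hcon
    push_neg at hcon
    obtain ⟨hu0, hv0⟩ := hcon
    obtain ⟨x, hx, hφx⟩ := hnontriv
    have hux : u x = 0 := by rw [hueq x hx, hu0, zero_mul]
    have hvx : v x = 0 := by rw [hveq x hx, hv0, zero_mul]
    have : (2 : ℂ) * Complex.I * lam * φ x = 0 := by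
      have := sub_eq_zero.mpr (hvx.trans hux.symm)
      simp only [hu, hv] at this
      linear_combination this
    have hφ0 : φ x = 0 := by
      have h2 : (2 : ℂ) * Complex.I * lam ≠ 0 := by
        apply mul_ne_zero (mul_ne_zero two_ne_zero Complex.I_ne_zero) hlam
      exact (mul_eq_zero.mp this).resolve_left h2
    exact hφx hφ0
  have hmain : Complex.exp (Complex.I * lam * L) = ν ∨
      Complex.exp (-(Complex.I * lam * L)) = ν := by
    rcases hnz with h | h
    · right
      have := (mul_eq_zero.mp hufac).resolve_left h
      exact sub_eq_zero.mp this
    · left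
      have := (mul_eq_zero.mp hvfac).resolve_left h
      exact sub_eq_zero.mp this
  -- |ν| = 1
  have hν' : ν = Complex.exp (((k * L * Real.cos θ : ℝ) : ℂ) * Complex.I) := by
    rw [hν]; congr 1; push_cast; ring
  have habsν : ‖ν‖ = 1 := by
    rw [hν']; exact Complex.norm_exp_ofReal_mul_I _
  have him : lam.im = 0 := by
    rcases hmain with h | h
    · have := congrArg (‖·‖) h
      rw [habsν, Complex.norm_exp] at this
      have hre : (Complex.I * lam * ↑L).re = 0 := by
        exact Real.exp_injective (by rw [this, Real.exp_zero])
      have : -lam.im * L = 0 := by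
        simpa [Complex.mul_re, Complex.mul_im] using hre
      have := (mul_eq_zero.mp this).resolve_right hL.ne'
      linarith
    · have := congrArg (‖·‖) h
      rw [habsν, Complex.norm_exp] at this
      have hre : (-(Complex.I * lam * ↑L)).re = 0 := by
        exact Real.exp_injective (by rw [this, Real.exp_zero])
      have : lam.im * L = 0 := by
        simpa [Complex.mul_re, Complex.mul_im] using hre
      have := (mul_eq_zero.mp this).resolve_right hL.ne'
      linarith
  refine ⟨hmain, him, ?_⟩
  rcases hmain with h | h
  · rw [hν'] at h
    obtain ⟨n, hn⟩ := Complex.exp_eq_exp_iff_exists_int.mp h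
    refine ⟨n, Or.inl ?_⟩
    push_cast at hn ⊢
    have hI := Complex.I_sq
    field_simp
    linear_combination (-Complex.I) * hn + (lam * L - k * L * Complex.cos (θ:ℂ) - 2 * Real.pi * n) * hI
  · rw [hν'] at h
    obtain ⟨n, hn⟩ := Complex.exp_eq_exp_iff_exists_int.mp h
    refine ⟨-n, Or.inr ?_⟩
    push_cast at hn ⊢
    have hI := Complex.I_sq
    field_simp
    linear_combination Complex.I * hn + (lam * L + k * L * Complex.cos (θ:ℂ) + 2 * Real.pi * n) * hI
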